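/- Let A be an n×n real symmetric matrix all of whose entries are 0 or 1 (the adjacency matrix of an unweighted graph), let Q be an n×n real orthogonal matrix, and let V be the positive-definite square root of I + A². Then for every index j, Σ_{p=1}^{n} ((V*Q)_{j p})² = 1 + deg(j), where deg(j) = #{i : A i j = 1} is the number of neighbors of node j. -/
import Mathlib


open Matrix Finset

/-- Corollary 1 of the paper: for an unweighted graph
(adjacency matrix with entries in {0,1}), the sum of squares of the entries of
the `j`-th row of `V * Q` equals `1 + deg j`, where `deg j` is the number of
neighbors of node `j`. -/
theorem row_sq_sum_unweighted {n : ℕ}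
    (A Q V : Matrix (Fin n) (Fin n) ℝ)
    (hA : A.IsSymm)
    (h01 : ∀ i j, A i j = 0 ∨ A i j = 1)
    (hQ : Q * Qᵀ = 1) (hQ' : Qᵀ * Q = 1)
    (hV : V.PosDef) (hV2 : V * V = 1 + A * A) :
    ∀ j, ∑ p, ((V * Q) j p) ^ 2
      = 1 + ((Finset.univ.filter fun i => A i j = 1).card : ℝ) := by
  intro j
  have hVsymm : Vᵀ = V := by
    have := hV.isHermitian
    simpa [Matrix.IsHermitian, Matrix.conjTranspose_eq_transpose_of_trivial] using this
  have key : ∑ p, ((V * Q) j p) ^ 2 = ((V * Q) * (V * Q)ᵀ) j j := by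
    simp [Matrix.mul_apply, Matrix.transpose_apply, sq, mul_comm]
  rw [key]
  have : (V * Q) * (V * Q)ᵀ = 1 + A * A := by
    rw [Matrix.transpose_mul, ← Matrix.mul_assoc, Matrix.mul_assoc V Q Qᵀ, hQ,
      Matrix.mul_one, hVsymm, hV2]
  rw [this]
  have hdiag : (1 + A * A) j j = 1 + ∑ i, A i j * A i j := by
    simp [Matrix.add_apply, Matrix.mul_apply, Matrix.one_apply]
    exact Finset.sum_congr rfl fun i _ => by
      rw [show A j i = A i j from hA.apply i j ▸ (congrFun (congrFun hA.symm i) j)]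
  rw [hdiag]
  congr 1
  rw [Finset.card_filter]
  push_cast
  exact Finset.sum_congr rfl fun i _ => by
    rcases h01 i j with h | h <;> simp [h]
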